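/- Let n ≥ 4 and let Q : Matrix (Fin (n+1)) (Fin (n+1)) ℂ be the adjacency matrix of the extended Dynkin graph D̃_n: Q i j = 1 (and Q j i = 1) exactly when the unordered pair {i, j} (of natural-number values) is {0, 2}, {1, 2}, {k, k+1} for some 2 ≤ k ≤ n−3, {n−2, n−1}, or {n−2, n}; and all other entries are 0. Then spectralRadius ℂ Q = 2. -/

import Mathlib

open Matrix Finset
open scoped ENNReal NNReal


def econd (n : ℕ) (i j : Fin (n + 1)) : Prop :=
  (i.val = 0 ∧ j.val = 2) ∨ (j.val = 0 ∧ i.val = 2) ∨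
  (i.val = 1 ∧ j.val = 2) ∨ (j.val = 1 ∧ i.val = 2) ∨
  (2 ≤ i.val ∧ i.val ≤ n - 3 ∧ j.val = i.val + 1) ∨
  (2 ≤ j.val ∧ j.val ≤ n - 3 ∧ i.val = j.val + 1) ∨
  (i.val = n - 2 ∧ j.val = n - 1) ∨ (j.val = n - 2 ∧ i.val = n - 1) ∨
  (i.val = n - 2 ∧ j.val = n) ∨ (j.val = n - 2 ∧ i.val = n)

instance (n : ℕ) (i j : Fin (n + 1)) : Decidable (econd n i j) := by
  unfold econd; infer_instance

def Dmat (n : ℕ) : Matrix (Fin (n + 1)) (Fin (n + 1)) ℝ := fun i j =>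
  if econd n i j then 1 else 0

def wt (n : ℕ) (i : Fin (n + 1)) : ℝ :=
  if i.val = 0 ∨ i.val = 1 ∨ i.val = n - 1 ∨ i.val = n then 1 else 2

lemma wt_pos (n : ℕ) (i : Fin (n + 1)) : 0 < wt n i := by
  unfold wt; split_ifs <;> norm_num

lemma ind_zero {P : Prop} [Decidable P] {x : ℝ} (h : ¬ P ∨ x = 0) :
    (if P then x else 0) = 0 := by
  rcases h with h | h
  · rw [if_neg h]
  · split <;> simp [h]

lemma pt (n : ℕ) (i : Fin (n+1)) (av bv cv dv : ℕ) (x y z t : ℝ) (j : Fin (n+1))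
      (hza : ¬ econd n i j → ¬ j.val = av ∨ x = 0)
      (hzb : ¬ econd n i j → ¬ j.val = bv ∨ y = 0)
      (hzc : ¬ econd n i j → ¬ j.val = cv ∨ z = 0)
      (hzd : ¬ econd n i j → ¬ j.val = dv ∨ t = 0)
      (hval : econd n i j →
        wt n j = (if j.val = av then x else 0) + (if j.val = bv then y else 0)
        + (if j.val = cv then z else 0) + (if j.val = dv then t else 0)) :
      Dmat n i j * wt n j =
        (if j.val = av then x else 0) + (if j.val = bv then y else 0)
        + (if j.val = cv then z else 0) + (if j.val = dv then t else 0) := by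
  unfold Dmat
  by_cases hc : econd n i j
  · rw [if_pos hc, one_mul]; exact hval hc
  · rw [if_neg hc, zero_mul,
      ind_zero (hza hc), ind_zero (hzb hc), ind_zero (hzc hc), ind_zero (hzd hc)]
    norm_num

lemma four_ind_sum {m : ℕ} (f : Fin m → ℝ) (a b c d : Fin m) (x y z t : ℝ)
    (h : ∀ j, f j = (if j = a then x else 0) + (if j = b then y else 0)
      + (if j = c then z else 0) + (if j = d then t else 0)) :
    ∑ j, f j = x + y + z + t := by
  simp [h, Finset.sum_add_distrib]

lemma main_sum (n : ℕ) (i : Fin (n+1)) (av bv cv dv : ℕ)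
    (ha : av < n+1) (hb : bv < n+1) (hc : cv < n+1) (hd : dv < n+1) (x y z t : ℝ)
    (hpt : ∀ j : Fin (n+1), Dmat n i j * wt n j =
        (if j.val = av then x else 0) + (if j.val = bv then y else 0)
        + (if j.val = cv then z else 0) + (if j.val = dv then t else 0)) :
    ∑ j, Dmat n i j * wt n j = x + y + z + t := by
  refine four_ind_sum _ ⟨av, ha⟩ ⟨bv, hb⟩ ⟨cv, hc⟩ ⟨dv, hd⟩ x y z t ?_
  intro j
  simpa only [Fin.ext_iff] using hpt j

set_option maxHeartbeats 1000000 in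

lemma key (n : ℕ) (hn : 4 ≤ n) (i : Fin (n + 1)) :
    ∑ j, Dmat n i j * wt n j = 2 * wt n i := by
  have hi := i.isLt
  by_cases h0 : i.val = 0
  · rw [main_sum n i 2 2 2 2 (by omega) (by omega) (by omega) (by omega) 2 0 0 0 ?_]
    · unfold wt; split_ifs <;> first | (exfalso; omega) | (exfalso; simp_all <;> omega) | norm_num
    · intro j; have hj := j.isLt
      refine pt n i _ _ _ _ _ _ _ _ j ?_ ?_ ?_ ?_ ?_ <;>
        intro h <;> [skip; exact Or.inr rfl; exact Or.inr rfl; exact Or.inr rfl; skip] <;>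
        unfold econd at h
      · exact Or.inl (by omega)
      · have hv : j.val = 2 := by omega
        clear h
        unfold wt; simp only [hv]; split_ifs <;> first | (exfalso; omega) | (exfalso; simp_all <;> omega) | norm_num
  by_cases h1 : i.val = 1
  · rw [main_sum n i 2 2 2 2 (by omega) (by omega) (by omega) (by omega) 2 0 0 0 ?_]
    · unfold wt; split_ifs <;> first | (exfalso; omega) | (exfalso; simp_all <;> omega) | norm_num
    · intro j; have hj := j.isLt
      refine pt n i _ _ _ _ _ _ _ _ j ?_ ?_ ?_ ?_ ?_ <;>
        intro h <;> [skip; exact Or.inr rfl; exact Or.inr rfl; exact Or.inr rfl; skip] <;>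
        unfold econd at h
      · exact Or.inl (by omega)
      · have hv : j.val = 2 := by omega
        clear h
        unfold wt; simp only [hv]; split_ifs <;> first | (exfalso; omega) | (exfalso; simp_all <;> omega) | norm_num
  by_cases h2 : i.val = 2
  · by_cases h4 : n = 4
    · rw [main_sum n i 0 1 3 4 (by omega) (by omega) (by omega) (by omega) 1 1 1 1 ?_]
      · unfold wt; split_ifs <;> first | (exfalso; omega) | (exfalso; simp_all <;> omega) | norm_num
      · intro j; have hj := j.isLt
        refine pt n i _ _ _ _ _ _ _ _ j ?_ ?_ ?_ ?_ ?_ <;> intro h <;> unfold econd at h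
        · exact Or.inl (by omega)
        · exact Or.inl (by omega)
        · exact Or.inl (by omega)
        · exact Or.inl (by omega)
        · have hv : j.val = 0 ∨ j.val = 1 ∨ j.val = 3 ∨ j.val = 4 := by omega
          clear h; unfold wt
          rcases hv with h | h | h | h <;> simp only [h] <;>
            split_ifs <;> first | (exfalso; omega) | (exfalso; simp_all <;> omega) | norm_num
    · rw [main_sum n i 0 1 3 0 (by omega) (by omega) (by omega) (by omega) 1 1 2 0 ?_]
      · unfold wt; split_ifs <;> first | (exfalso; omega) | (exfalso; simp_all <;> omega) | norm_num
      · intro j; have hj := j.isLt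
        refine pt n i _ _ _ _ _ _ _ _ j ?_ ?_ ?_ ?_ ?_ <;>
          intro h <;> [skip; skip; skip; exact Or.inr rfl; skip] <;> unfold econd at h
        · exact Or.inl (by omega)
        · exact Or.inl (by omega)
        · exact Or.inl (by omega)
        · have hv : j.val = 0 ∨ j.val = 1 ∨ j.val = 3 := by omega
          clear h; unfold wt
          rcases hv with h | h | h <;> simp only [h] <;>
            split_ifs <;> first | (exfalso; omega) | (exfalso; simp_all <;> omega) | norm_num
  by_cases hv1 : i.val = n - 1
  · rw [main_sum n i (n-2) (n-2) (n-2) (n-2) (by omega) (by omega) (by omega) (by omega)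
      2 0 0 0 ?_]
    · unfold wt; split_ifs <;> first | (exfalso; omega) | (exfalso; simp_all <;> omega) | norm_num
    · intro j; have hj := j.isLt
      refine pt n i _ _ _ _ _ _ _ _ j ?_ ?_ ?_ ?_ ?_ <;>
        intro h <;> [skip; exact Or.inr rfl; exact Or.inr rfl; exact Or.inr rfl; skip] <;>
        unfold econd at h
      · exact Or.inl (by omega)
      · have hv : j.val = n - 2 := by omega
        clear h
        unfold wt; simp only [hv]; split_ifs <;> first | (exfalso; omega) | (exfalso; simp_all <;> omega) | norm_num
  by_cases hvn : i.val = n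
  · rw [main_sum n i (n-2) (n-2) (n-2) (n-2) (by omega) (by omega) (by omega) (by omega)
      2 0 0 0 ?_]
    · unfold wt; split_ifs <;> first | (exfalso; omega) | (exfalso; simp_all <;> omega) | norm_num
    · intro j; have hj := j.isLt
      refine pt n i _ _ _ _ _ _ _ _ j ?_ ?_ ?_ ?_ ?_ <;>
        intro h <;> [skip; exact Or.inr rfl; exact Or.inr rfl; exact Or.inr rfl; skip] <;>
        unfold econd at h
      · exact Or.inl (by omega)
      · have hv : j.val = n - 2 := by omega
        clear h
        unfold wt; simp only [hv]; split_ifs <;> first | (exfalso; omega) | (exfalso; simp_all <;> omega) | norm_num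
  by_cases hv2 : i.val = n - 2
  · rw [main_sum n i (n-3) (n-1) n (n-3) (by omega) (by omega) (by omega) (by omega)
      2 1 1 0 ?_]
    · unfold wt; split_ifs <;> first | (exfalso; omega) | (exfalso; simp_all <;> omega) | norm_num
    · intro j; have hj := j.isLt
      refine pt n i _ _ _ _ _ _ _ _ j ?_ ?_ ?_ ?_ ?_ <;>
        intro h <;> [skip; skip; skip; exact Or.inr rfl; skip] <;> unfold econd at h
      · exact Or.inl (by omega)
      · exact Or.inl (by omega)
      · exact Or.inl (by omega)
      · have hv : j.val = n - 3 ∨ j.val = n - 1 ∨ j.val = n := by omega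
        clear h; unfold wt
        rcases hv with h | h | h <;> simp only [h] <;>
          split_ifs <;> first | (exfalso; omega) | (exfalso; simp_all <;> omega) | norm_num
  · rw [main_sum n i (i.val-1) (i.val+1) (i.val-1) (i.val-1) (by omega) (by omega)
      (by omega) (by omega) 2 2 0 0 ?_]
    · unfold wt; split_ifs <;> first | (exfalso; omega) | (exfalso; simp_all <;> omega) | norm_num
    · intro j; have hj := j.isLt
      refine pt n i _ _ _ _ _ _ _ _ j ?_ ?_ ?_ ?_ ?_ <;>
        intro h <;> [skip; skip; exact Or.inr rfl; exact Or.inr rfl; skip] <;>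
        unfold econd at h
      · exact Or.inl (by omega)
      · exact Or.inl (by omega)
      · have hv : j.val = i.val - 1 ∨ j.val = i.val + 1 := by omega
        clear h; unfold wt
        rcases hv with h | h <;> simp only [h] <;>
          split_ifs <;> first | (exfalso; omega) | (exfalso; simp_all <;> omega) | norm_num


lemma Dmat_nonneg (n : ℕ) (i j : Fin (n + 1)) : 0 ≤ Dmat n i j := by
  unfold Dmat; split_ifs <;> norm_num

/-- The adjacency matrix of the extended Dynkin graph `D̃_n` (for `n ≥ 4`) has spectral
radius `2`.  The graph `D̃_n` has vertices `0, 1, …, n`: vertices `0` and `1` are each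
joined to vertex `2`, there is a path `2 — 3 — ⋯ — (n-2)` (edges `{k, k+1}` for
`2 ≤ k ≤ n - 3`), and vertices `n-1` and `n` are each joined to vertex `n-2`. -/
theorem spectralRadius_Dtilde_eq_two
    (n : ℕ) (hn : 4 ≤ n)
    (Q : Matrix (Fin (n + 1)) (Fin (n + 1)) ℂ)
    (hQ : ∀ i j : Fin (n + 1), Q i j =
      if (i.val = 0 ∧ j.val = 2) ∨ (j.val = 0 ∧ i.val = 2) ∨
         (i.val = 1 ∧ j.val = 2) ∨ (j.val = 1 ∧ i.val = 2) ∨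
         (2 ≤ i.val ∧ i.val ≤ n - 3 ∧ j.val = i.val + 1) ∨
         (2 ≤ j.val ∧ j.val ≤ n - 3 ∧ i.val = j.val + 1) ∨
         (i.val = n - 2 ∧ j.val = n - 1) ∨ (j.val = n - 2 ∧ i.val = n - 1) ∨
         (i.val = n - 2 ∧ j.val = n) ∨ (j.val = n - 2 ∧ i.val = n)
      then 1 else 0) :
    spectralRadius ℂ Q = 2 := by
  -- Q is the complex version of Dmat
  have hQA : ∀ i j, Q i j = ((Dmat n i j : ℝ) : ℂ) := by
    intro i j
    rw [hQ i j]
    unfold Dmat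
    by_cases hc : econd n i j
    · have hc' := hc; unfold econd at hc'
      rw [if_pos hc', if_pos hc]; norm_num
    · have hc' := hc; unfold econd at hc'
      rw [if_neg hc', if_neg hc]; norm_num
  -- the eigenvector for eigenvalue 2
  set v : Fin (n + 1) → ℂ := fun j => ((wt n j : ℝ) : ℂ) with hv
  have hmul : Q.mulVec v = (2 : ℂ) • v := by
    funext i
    simp only [Matrix.mulVec, dotProduct, Pi.smul_apply, smul_eq_mul, hv]
    have : ∀ j, Q i j * ((wt n j : ℝ) : ℂ) = ((Dmat n i j * wt n j : ℝ) : ℂ) := by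
      intro j; rw [hQA]; push_cast; ring
    rw [Finset.sum_congr rfl fun j _ => this j, ← Complex.ofReal_sum, key n hn i]
    push_cast; ring
  have hv0 : v ≠ 0 := by
    intro h
    have := congrFun h ⟨0, by omega⟩
    simp only [hv, Pi.zero_apply, Complex.ofReal_eq_zero] at this
    exact absurd this (ne_of_gt (wt_pos n _))
  -- membership of 2 in the spectrum
  have h2mem : (2 : ℂ) ∈ spectrum ℂ Q := by
    rw [spectrum.mem_iff]
    intro hu
    rw [Matrix.isUnit_iff_isUnit_det] at hu
    have hdet : (algebraMap ℂ (Matrix (Fin (n+1)) (Fin (n+1)) ℂ) 2 - Q).det = 0 := by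
      rw [← Matrix.exists_mulVec_eq_zero_iff]
      refine ⟨v, hv0, ?_⟩
      rw [Matrix.sub_mulVec, Algebra.algebraMap_eq_smul_one, Matrix.smul_mulVec,
        Matrix.one_mulVec, hmul, sub_self]
    rw [hdet] at hu
    exact (not_isUnit_zero : ¬ IsUnit (0 : ℂ)) hu
  -- upper bound on spectrum
  have hbound : ∀ μ : ℂ, μ ∈ spectrum ℂ Q → ‖μ‖ ≤ 2 := by
    intro μ hμ
    rw [spectrum.mem_iff, Matrix.isUnit_iff_isUnit_det, isUnit_iff_ne_zero, not_not,
      ← Matrix.exists_mulVec_eq_zero_iff] at hμ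
    obtain ⟨u, hu0, huQ⟩ := hμ
    have huQ' : Q.mulVec u = μ • u := by
      rw [Matrix.sub_mulVec, Algebra.algebraMap_eq_smul_one, Matrix.smul_mulVec,
        Matrix.one_mulVec, sub_eq_zero] at huQ
      exact huQ.symm
    obtain ⟨i, -, hmax⟩ := Finset.exists_max_image Finset.univ
      (fun j => ‖u j‖ / wt n j) ⟨⟨0, by omega⟩, Finset.mem_univ _⟩
    set c : ℝ := ‖u i‖ / wt n i with hc
    have hub : ∀ j, ‖u j‖ ≤ c * wt n j := by
      intro j
      have := hmax j (Finset.mem_univ j)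
      rwa [div_le_iff₀ (wt_pos n j)] at this
    have hui : ‖u i‖ = c * wt n i := (div_mul_cancel₀ _ (ne_of_gt (wt_pos n i))).symm
    have hcpos : 0 < c := by
      obtain ⟨k, hk⟩ := Function.ne_iff.mp hu0
      calc (0:ℝ) < ‖u k‖ / wt n k :=
            div_pos (norm_pos_iff.mpr hk) (wt_pos n k)
        _ ≤ c := hmax k (Finset.mem_univ k)
    have huipos : 0 < ‖u i‖ := hui ▸ mul_pos hcpos (wt_pos n i)
    have hchain : ‖μ‖ * ‖u i‖ ≤ 2 * ‖u i‖ := by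
      have h1 : ‖μ‖ * ‖u i‖ = ‖(Q.mulVec u) i‖ := by
        rw [huQ']; simp [norm_mul]
      rw [h1]
      calc ‖(Q.mulVec u) i‖ = ‖∑ j, Q i j * u j‖ := rfl
        _ ≤ ∑ j, ‖Q i j * u j‖ := norm_sum_le _ _
        _ = ∑ j, Dmat n i j * ‖u j‖ := by
            refine Finset.sum_congr rfl fun j _ => ?_
            rw [norm_mul, hQA, Complex.norm_real, Real.norm_of_nonneg (Dmat_nonneg n i j)]
        _ ≤ ∑ j, Dmat n i j * (c * wt n j) := by
            refine Finset.sum_le_sum fun j _ => ?_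
            exact mul_le_mul_of_nonneg_left (hub j) (Dmat_nonneg n i j)
        _ = c * ∑ j, Dmat n i j * wt n j := by
            rw [Finset.mul_sum]; exact Finset.sum_congr rfl fun j _ => by ring
        _ = c * (2 * wt n i) := by rw [key n hn i]
        _ = 2 * (c * wt n i) := by ring
        _ = 2 * ‖u i‖ := by rw [hui]
    exact le_of_mul_le_mul_right hchain huipos
  -- conclude
  apply le_antisymm
  · refine iSup₂_le fun μ hμ => ?_
    have := hbound μ hμ
    have h2 : (‖μ‖₊ : ℝ≥0∞) ≤ ((2 : NNReal) : ℝ≥0∞) := by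
      rw [ENNReal.coe_le_coe, ← NNReal.coe_le_coe]
      simpa using this
    simpa using h2
  · have : ((‖(2:ℂ)‖₊ : ℝ≥0∞)) ≤ spectralRadius ℂ Q :=
      le_iSup₂ (f := fun μ (_ : μ ∈ spectrum ℂ Q) => (‖μ‖₊ : ℝ≥0∞)) 2 h2mem
    simpa using this
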